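/- Theorem 4.3(ii). Assume the nonsingularity assumption. Let μ* and ν* be probability measures on X such that Pμ* = μ*, ν* = Gμ* and μ* = Wν* (the correspondence between invariant measures of the discrete-time chain and of the continuous-time semigroup). Then μ* is absolutely continuous with respect to ℓ̄ if and only if ν* is absolutely continuous with respect to ℓ̄. -/

import Mathlib

open MeasureTheory ENNReal ProbabilityTheory Filter

noncomputable section

/-- The one-step transition probability of the chain of post-jump locations. -/
def Ptrans {Y I' Θ : Type*} [MeasurableSpace Y] [Fintype I'] [MeasurableSpace Θ]
    (ϑ : Measure Θ) (Λ : ℝ)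
    (S : I' → ℝ → Y → Y) (w : Θ → Y → Y) (p : Θ → Y → ℝ) (π' : I' → I' → Y → ℝ)
    (x : Y × I') (A : Set (Y × I')) : ℝ≥0∞ :=
  ∑ j : I', ∫⁻ θ, (∫⁻ t in Set.Ioi (0:ℝ),
      ENNReal.ofReal (Λ * Real.exp (-(Λ*t))) *
      Set.indicator A (fun _ => (1:ℝ≥0∞)) (w θ (S x.2 t x.1), j) *
      ENNReal.ofReal (π' x.2 j (w θ (S x.2 t x.1))) *
      ENNReal.ofReal (p θ (S x.2 t x.1))) ∂ϑ

/-- The kernel `G` (deterministic flow until an exponential time, no jump). -/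
def Gtrans {Y I' : Type*} [MeasurableSpace Y] (Λ : ℝ) (S : I' → ℝ → Y → Y)
    (x : Y × I') (A : Set (Y × I')) : ℝ≥0∞ :=
  ∫⁻ t in Set.Ioi (0:ℝ),
    ENNReal.ofReal (Λ * Real.exp (-(Λ*t))) *
    Set.indicator A (fun _ => (1:ℝ≥0∞)) (S x.2 t x.1, x.2)

/-- The kernel `W` (a single jump together with the switch of the semiflow index). -/
def Wtrans {Y I' Θ : Type*} [MeasurableSpace Y] [Fintype I'] [MeasurableSpace Θ]
    (ϑ : Measure Θ) (w : Θ → Y → Y) (p : Θ → Y → ℝ) (π' : I' → I' → Y → ℝ)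
    (x : Y × I') (A : Set (Y × I')) : ℝ≥0∞ :=
  ∑ j : I', ∫⁻ θ,
      Set.indicator A (fun _ => (1:ℝ≥0∞)) (w θ x.1, j) *
      ENNReal.ofReal (π' x.2 j (w θ x.1)) *
      ENNReal.ofReal (p θ x.1) ∂ϑ

/-- **Theorem 4.3(ii).** Under the nonsingularity assumption, if `μ*` is a `P`-invariant
probability measure and `ν* = Gμ*`, `μ* = Wν*` is the corresponding invariant measure of the
continuous-time semigroup, then `μ*` is absolutely continuous w.r.t. `ℓ̄` iff `ν*` is. -/
theorem thm_4_3_ii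
    {d N : ℕ} (hd : 0 < d) (hN : 0 < N)
    {Θ : Type*} [MeasurableSpace Θ] (ϑ : Measure Θ) [IsFiniteMeasure ϑ]
    (Λ : ℝ) (hΛ : 0 < Λ)
    (S : Fin N → ℝ → EuclideanSpace ℝ (Fin d) → EuclideanSpace ℝ (Fin d))
    (w : Θ → EuclideanSpace ℝ (Fin d) → EuclideanSpace ℝ (Fin d))
    (p : Θ → EuclideanSpace ℝ (Fin d) → ℝ)
    (π' : Fin N → Fin N → EuclideanSpace ℝ (Fin d) → ℝ)
    (hS_meas : ∀ i, Measurable (fun q : ℝ × EuclideanSpace ℝ (Fin d) => S i q.1 q.2))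
    (hw_meas : Measurable (fun q : Θ × EuclideanSpace ℝ (Fin d) => w q.1 q.2))
    (hp_meas : Measurable (fun q : Θ × EuclideanSpace ℝ (Fin d) => p q.1 q.2))
    (hπ_meas : ∀ i j, Measurable (π' i j))
    (hp_nonneg : ∀ θ y, 0 ≤ p θ y)
    (hp_int : ∀ y, ∫ θ, p θ y ∂ϑ = 1)
    (hπ_nonneg : ∀ i j y, 0 ≤ π' i j y)
    (hπ_sum : ∀ i y, ∑ j, π' i j y = 1)
    -- nonsingularity assumption
    (hw_ns : ∀ θ, (volume : Measure (EuclideanSpace ℝ (Fin d))).map (w θ) ≪ volume)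
    (hS_ns : ∀ i, ∀ t : ℝ, 0 ≤ t →
      (volume : Measure (EuclideanSpace ℝ (Fin d))).map (S i t) ≪ volume)
    -- corresponding invariant measures of P and of the semigroup
    (μs νs : Measure (EuclideanSpace ℝ (Fin d) × Fin N))
    [IsProbabilityMeasure μs] [IsProbabilityMeasure νs]
    (hinv : ∀ A : Set (EuclideanSpace ℝ (Fin d) × Fin N), MeasurableSet A →
      (∫⁻ x, Ptrans ϑ Λ S w p π' x A ∂μs) = μs A)
    (hG : ∀ A : Set (EuclideanSpace ℝ (Fin d) × Fin N), MeasurableSet A →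
      νs A = ∫⁻ x, Gtrans Λ S x A ∂μs)
    (hW : ∀ A : Set (EuclideanSpace ℝ (Fin d) × Fin N), MeasurableSet A →
      μs A = ∫⁻ x, Wtrans ϑ w p π' x A ∂νs) :
    μs ≪ (volume : Measure (EuclideanSpace ℝ (Fin d))).prod Measure.count ↔
    νs ≪ (volume : Measure (EuclideanSpace ℝ (Fin d))).prod Measure.count := by
  classical
  have hSmeas : ∀ i (t : ℝ), Measurable (S i t) := fun i t => by
    exact (hS_meas i).comp (measurable_prodMk_left (x := t))
  have hwmeas : ∀ θ, Measurable (w θ) := fun θ => by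
    exact hw_meas.comp (measurable_prodMk_left (x := θ))
  have hsliceM : ∀ (A : Set (EuclideanSpace ℝ (Fin d) × Fin N)), MeasurableSet A →
      ∀ j : Fin N, MeasurableSet {y : EuclideanSpace ℝ (Fin d) | (y, j) ∈ A} := by
    intro A hA j
    exact (measurable_id.prodMk measurable_const) hA
  have hslice : ∀ (A : Set (EuclideanSpace ℝ (Fin d) × Fin N)), MeasurableSet A →
      ((volume : Measure (EuclideanSpace ℝ (Fin d))).prod Measure.count) A = 0 → ∀ j : Fin N,
      (volume : Measure (EuclideanSpace ℝ (Fin d))) {y | (y, j) ∈ A} = 0 := by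
    intro A hA h0 j
    have hsub : {y : EuclideanSpace ℝ (Fin d) | (y, j) ∈ A} ×ˢ ({j} : Set (Fin N)) ⊆ A := by
      rintro ⟨y, i⟩ ⟨hy, hi⟩
      simp only [Set.mem_singleton_iff] at hi
      subst hi; exact hy
    have h := measure_mono_null hsub h0
    rwa [Measure.prod_prod, Measure.count_singleton, mul_one] at h
  constructor
  · -- μs ≪ ℓ → νs ≪ ℓ
    intro hμ
    refine Measure.AbsolutelyContinuous.mk fun A hA hA0 => ?_
    rw [hG A hA]
    have hf : Measurable (Function.uncurry
        (fun (x : EuclideanSpace ℝ (Fin d) × Fin N) (t : ℝ) =>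
        ENNReal.ofReal (Λ * Real.exp (-(Λ*t))) *
        Set.indicator A (fun _ => (1:ℝ≥0∞)) (S x.2 t x.1, x.2))) := by
      have hjointS : Measurable (fun q : (EuclideanSpace ℝ (Fin d) × Fin N) × ℝ =>
          (S q.1.2 q.2 q.1.1, q.1.2)) := by
        have hg : Measurable (fun z : (EuclideanSpace ℝ (Fin d) × ℝ) × Fin N =>
            S z.2 z.1.2 z.1.1) :=
          measurable_from_prod_countable_left fun i => by
            exact (hS_meas i).comp (measurable_snd.prodMk measurable_fst)
        exact (hg.comp ((measurable_fst.fst.prodMk measurable_snd).prodMk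
          measurable_fst.snd)).prodMk measurable_fst.snd
      refine Measurable.mul ?_ ((measurable_one.indicator hA).comp hjointS)
      exact ENNReal.measurable_ofReal.comp
        ((measurable_snd.const_mul Λ).neg.exp.const_mul Λ)
    have hswap : (∫⁻ x, (∫⁻ t in Set.Ioi (0:ℝ), ENNReal.ofReal (Λ * Real.exp (-(Λ*t))) *
          Set.indicator A (fun _ => (1:ℝ≥0∞)) (S x.2 t x.1, x.2)) ∂μs)
        = ∫⁻ t in Set.Ioi (0:ℝ), ∫⁻ x, ENNReal.ofReal (Λ * Real.exp (-(Λ*t))) *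
          Set.indicator A (fun _ => (1:ℝ≥0∞)) (S x.2 t x.1, x.2) ∂μs :=
      lintegral_lintegral_swap hf.aemeasurable
    have hzero : ∀ t ∈ Set.Ioi (0:ℝ), (∫⁻ x, ENNReal.ofReal (Λ * Real.exp (-(Λ*t))) *
        Set.indicator A (fun _ => (1:ℝ≥0∞)) (S x.2 t x.1, x.2) ∂μs) = 0 := by
      intro t ht
      have hB : ((volume : Measure (EuclideanSpace ℝ (Fin d))).prod Measure.count)
          {x : EuclideanSpace ℝ (Fin d) × Fin N | (S x.2 t x.1, x.2) ∈ A} = 0 := by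
        have hsub : {x : EuclideanSpace ℝ (Fin d) × Fin N | (S x.2 t x.1, x.2) ∈ A} ⊆
            ⋃ i : Fin N, (S i t ⁻¹' {y | (y, i) ∈ A}) ×ˢ ({i} : Set (Fin N)) := by
          rintro ⟨y, i⟩ hx
          exact Set.mem_iUnion.2 ⟨i, ⟨hx, rfl⟩⟩
        refine measure_mono_null hsub (le_antisymm (le_trans (measure_iUnion_le _) ?_)
          zero_le)
        have hz : ∀ i : Fin N,
            ((volume : Measure (EuclideanSpace ℝ (Fin d))).prod Measure.count)
            ((S i t ⁻¹' {y | (y, i) ∈ A}) ×ˢ ({i} : Set (Fin N))) = 0 := by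
          intro i
          rw [Measure.prod_prod]
          have h1 : (volume : Measure (EuclideanSpace ℝ (Fin d)))
              (S i t ⁻¹' {y | (y, i) ∈ A}) = 0 := by
            have h2 := hS_ns i t (le_of_lt ht) (hslice A hA hA0 i)
            rwa [Measure.map_apply (hSmeas i t) (hsliceM A hA i)] at h2
          rw [h1, zero_mul]
        simp only [hz, tsum_zero, le_refl]
      have hBμ := hμ hB
      have hae : ∀ᵐ x ∂μs, (ENNReal.ofReal (Λ * Real.exp (-(Λ*t))) *
          Set.indicator A (fun _ => (1:ℝ≥0∞)) (S x.2 t x.1, x.2)) = 0 := by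
        rw [ae_iff]
        refine measure_mono_null ?_ hBμ
        intro x hx
        simp only [Set.mem_setOf_eq] at hx ⊢
        by_contra hmem
        exact hx (by rw [Set.indicator_of_notMem hmem, mul_zero])
      rw [lintegral_congr_ae hae, lintegral_zero]
    calc (∫⁻ x, Gtrans Λ S x A ∂μs)
        = ∫⁻ t in Set.Ioi (0:ℝ), ∫⁻ x, ENNReal.ofReal (Λ * Real.exp (-(Λ*t))) *
          Set.indicator A (fun _ => (1:ℝ≥0∞)) (S x.2 t x.1, x.2) ∂μs := hswap
      _ = ∫⁻ _ in Set.Ioi (0:ℝ), (0:ℝ≥0∞) :=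
          setLIntegral_congr_fun measurableSet_Ioi hzero
      _ = 0 := lintegral_zero
  · -- νs ≪ ℓ → μs ≪ ℓ
    intro hν
    refine Measure.AbsolutelyContinuous.mk fun A hA hA0 => ?_
    rw [hW A hA]
    have hj : ∀ j : Fin N, Measurable (Function.uncurry
        (fun (x : EuclideanSpace ℝ (Fin d) × Fin N) (θ : Θ) =>
        Set.indicator A (fun _ => (1:ℝ≥0∞)) (w θ x.1, j) *
        ENNReal.ofReal (π' x.2 j (w θ x.1)) * ENNReal.ofReal (p θ x.1))) := by
      intro j
      have hwq : Measurable (fun q : (EuclideanSpace ℝ (Fin d) × Fin N) × Θ =>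
          w q.2 q.1.1) := by
        exact hw_meas.comp (measurable_snd.prodMk measurable_fst.fst)
      have hπj : Measurable (fun z : EuclideanSpace ℝ (Fin d) × Fin N => π' z.2 j z.1) :=
        measurable_from_prod_countable_left fun i => by exact hπ_meas i j
      refine Measurable.mul (Measurable.mul ?_ ?_) ?_
      · exact (measurable_one.indicator hA).comp (hwq.prodMk measurable_const)
      · exact ENNReal.measurable_ofReal.comp
          (hπj.comp (hwq.prodMk measurable_fst.snd))
      · exact ENNReal.measurable_ofReal.comp
          (by exact hp_meas.comp (measurable_snd.prodMk measurable_fst.fst))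
    have hmeasInt : ∀ j : Fin N, Measurable
        (fun x : EuclideanSpace ℝ (Fin d) × Fin N => ∫⁻ θ,
        Set.indicator A (fun _ => (1:ℝ≥0∞)) (w θ x.1, j) *
        ENNReal.ofReal (π' x.2 j (w θ x.1)) * ENNReal.ofReal (p θ x.1) ∂ϑ) :=
      fun j => Measurable.lintegral_prod_right (hj j)
    have hinner : ∀ j : Fin N, ∀ θ : Θ, (∫⁻ x : EuclideanSpace ℝ (Fin d) × Fin N,
        Set.indicator A (fun _ => (1:ℝ≥0∞)) (w θ x.1, j) *
        ENNReal.ofReal (π' x.2 j (w θ x.1)) * ENNReal.ofReal (p θ x.1) ∂νs) = 0 := by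
      intro j θ
      have hC : ((volume : Measure (EuclideanSpace ℝ (Fin d))).prod Measure.count)
          ((w θ ⁻¹' {y | (y, j) ∈ A}) ×ˢ (Set.univ : Set (Fin N))) = 0 := by
        rw [Measure.prod_prod]
        have h1 : (volume : Measure (EuclideanSpace ℝ (Fin d)))
            (w θ ⁻¹' {y | (y, j) ∈ A}) = 0 := by
          have h2 := hw_ns θ (hslice A hA hA0 j)
          rwa [Measure.map_apply (hwmeas θ) (hsliceM A hA j)] at h2
        rw [h1, zero_mul]
      have hCν := hν hC
      have hae : ∀ᵐ x ∂νs, (Set.indicator A (fun _ => (1:ℝ≥0∞)) (w θ x.1, j) *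
          ENNReal.ofReal (π' x.2 j (w θ x.1)) * ENNReal.ofReal (p θ x.1)) = 0 := by
        rw [ae_iff]
        refine measure_mono_null ?_ hCν
        intro x hx
        simp only [Set.mem_setOf_eq] at hx
        refine ⟨?_, Set.mem_univ _⟩
        by_contra hmem
        have hmem' : (w θ x.1, j) ∉ A := fun h => hmem h
        exact hx (by rw [Set.indicator_of_notMem hmem', zero_mul, zero_mul])
      rw [lintegral_congr_ae hae, lintegral_zero]
    calc (∫⁻ x, Wtrans ϑ w p π' x A ∂νs)
        = ∑ j : Fin N, ∫⁻ x : EuclideanSpace ℝ (Fin d) × Fin N, ∫⁻ θ,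
            Set.indicator A (fun _ => (1:ℝ≥0∞)) (w θ x.1, j) *
            ENNReal.ofReal (π' x.2 j (w θ x.1)) * ENNReal.ofReal (p θ x.1) ∂ϑ ∂νs := by
          simp only [Wtrans]
          exact lintegral_finset_sum _ (fun j _ => hmeasInt j)
      _ = ∑ j : Fin N, ∫⁻ θ, ∫⁻ x : EuclideanSpace ℝ (Fin d) × Fin N,
            Set.indicator A (fun _ => (1:ℝ≥0∞)) (w θ x.1, j) *
            ENNReal.ofReal (π' x.2 j (w θ x.1)) * ENNReal.ofReal (p θ x.1) ∂νs ∂ϑ :=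
          Finset.sum_congr rfl fun j _ => lintegral_lintegral_swap (hj j).aemeasurable
      _ = 0 := by
        refine Finset.sum_eq_zero fun j _ => ?_
        simp only [hinner j]
        exact lintegral_zero
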